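/- For every d ≥ 3, the polynomial map f_d: ℂ² → ℂ² given by f_d(x,y) = (x + y + xy, x^{d-1} y) is proper and has topological degree d. -/

import Mathlib

open MvPolynomial in
noncomputable def psum (m : ℕ) : ℕ → MvPolynomial (Fin 2) ℂ
  | 0 => C 2
  | 1 => C (((m : ℂ) + 1) / ((m : ℂ) + 2)) * X 0 - C (((m : ℂ) + 3) / ((m : ℂ) + 2))
  | (k + 2) => psum m 1 * psum m (k + 1) + X 0 * psum m k

open MvPolynomial in
noncomputable def Qpoly (m : ℕ) : MvPolynomial (Fin 2) ℂ :=
  (X 1) ^ 2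
    - (C ((m : ℂ) + 2) * psum m (m + 3) - C ((m : ℂ) + 1) * X 0 * psum m (m + 2)) * X 1
    + C ((-1 : ℂ) ^ (m + 3)) * (X 0) ^ (m + 3)

lemma hm2C (m : ℕ) : ((m : ℂ) + 2) ≠ 0 := by
  have : ((m + 2 : ℕ) : ℂ) ≠ 0 := Nat.cast_ne_zero.mpr (Nat.succ_ne_zero _)
  push_cast at this; exact this

lemma psum_eval (m : ℕ) (s t r1 r2 : ℂ)
    (hsum : ((m : ℂ) + 2) * (r1 + r2) = ((m : ℂ) + 1) * s - ((m : ℂ) + 3))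
    (hprod : r1 * r2 = -s) (k : ℕ) :
    MvPolynomial.eval ![s, t] (psum m k) = r1 ^ k + r2 ^ k := by
  have hm2 := hm2C m
  have he : MvPolynomial.eval ![s, t] (psum m 1) = r1 + r2 := by
    rw [psum]
    simp only [map_sub, map_mul, MvPolynomial.eval_C, MvPolynomial.eval_X]
    have h0 : (![s, t] : Fin 2 → ℂ) 0 = s := rfl
    rw [h0]
    field_simp
    linear_combination -hsum
  induction k using Nat.strong_induction_on with
  | _ k ih =>
    match k with
    | 0 => rw [psum]; simp; norm_num
    | 1 => rw [he]; ring
    | (k + 2) =>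
      have h1 := ih (k + 1) (by omega)
      have h0 := ih k (by omega)
      rw [psum]
      simp only [map_add, map_mul, he, h1, h0, MvPolynomial.eval_X]
      have hx : (![s, t] : Fin 2 → ℂ) 0 = s := rfl
      rw [hx]
      have hs : s = -(r1 * r2) := by linear_combination hprod
      rw [hs]; ring

lemma Qpoly_eval (m : ℕ) (s t r1 r2 : ℂ)
    (hsum : ((m : ℂ) + 2) * (r1 + r2) = ((m : ℂ) + 1) * s - ((m : ℂ) + 3))
    (hprod : r1 * r2 = -s) :
    MvPolynomial.eval ![s, t] (Qpoly m) =
      (t * (((m : ℂ) + 1) * r1 + ((m : ℂ) + 2)) - r1 ^ (m + 3)) *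
      (t * (((m : ℂ) + 1) * r2 + ((m : ℂ) + 2)) - r2 ^ (m + 3)) := by
  have hP3 := psum_eval m s t r1 r2 hsum hprod (m + 3)
  have hP2 := psum_eval m s t r1 r2 hsum hprod (m + 2)
  rw [Qpoly]
  simp only [map_add, map_sub, map_mul, map_pow, MvPolynomial.eval_C, MvPolynomial.eval_X,
    hP3, hP2]
  have hx0 : (![s, t] : Fin 2 → ℂ) 0 = s := rfl
  have hx1 : (![s, t] : Fin 2 → ℂ) 1 = t := rfl
  rw [hx0, hx1]
  have hs : s = -(r1 * r2) := by linear_combination hprod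
  subst hs
  have hconst : ((-1 : ℂ)) ^ (m + 3) * (-(r1 * r2)) ^ (m + 3) = (r1 * r2) ^ (m + 3) := by
    rw [← mul_pow, neg_one_mul, neg_neg]
  rw [hconst]
  linear_combination (-(t ^ 2) * ((m : ℂ) + 1)) * hsum

lemma proper_part (m : ℕ) (K : Set (ℂ × ℂ)) (hK : IsCompact K) :
    IsCompact ((fun p : ℂ × ℂ => (p.1 + p.2 + p.1 * p.2, p.1 ^ (m + 2) * p.2)) ⁻¹' K) := by
  rw [Metric.isCompact_iff_isClosed_bounded]
  constructor
  · exact hK.isClosed.preimage (by fun_prop)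
  · obtain ⟨C0, hC0⟩ := isBounded_iff_forall_norm_le.mp hK.isBounded
    set C := max C0 0 with hCdef
    have hC : 0 ≤ C := le_max_right _ _
    rw [isBounded_iff_forall_norm_le]
    refine ⟨2 ^ (m + 2) * C + 2 * C + 4, ?_⟩
    rintro ⟨x, y⟩ hxy
    simp only [Set.mem_preimage] at hxy
    have hn : ‖((x + y + x * y, x ^ (m + 2) * y) : ℂ × ℂ)‖ ≤ C :=
      le_trans (hC0 _ hxy) (le_max_left _ _)
    have h1 : ‖x + y + x * y‖ ≤ C := by
      have h := norm_fst_le ((x + y + x * y, x ^ (m + 2) * y) : ℂ × ℂ)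
      exact le_trans h hn
    have h2 : ‖x‖ ^ (m + 2) * ‖y‖ ≤ C := by
      have := le_trans (norm_snd_le ((x + y + x * y, x ^ (m + 2) * y) : ℂ × ℂ)) hn
      simpa [norm_mul, norm_pow] using this
    set a := ‖x‖ with ha'
    set b := ‖y‖ with hb'
    have ha0 : 0 ≤ a := norm_nonneg _
    have hb0 : 0 ≤ b := norm_nonneg _
    have hyx : b * ‖1 + x‖ = ‖(x + y + x * y) - x‖ := by
      rw [← norm_mul]; ring_nf
    have hyx_le : b * ‖1 + x‖ ≤ C + a := by
      rw [hyx]; exact le_trans (norm_sub_le _ _) (by linarith)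
    have hyx_ge : a - C ≤ b * ‖1 + x‖ := by
      rw [hyx]
      have := norm_sub_norm_le x (x + y + x * y)
      have h3 : ‖x - (x + y + x * y)‖ = ‖(x + y + x * y) - x‖ := norm_sub_rev _ _
      linarith
    have h1x_le : ‖1 + x‖ ≤ 1 + a := by
      calc ‖1 + x‖ ≤ ‖(1:ℂ)‖ + ‖x‖ := norm_add_le _ _
        _ = 1 + a := by rw [norm_one]
    have h1x_ge : 1 - a ≤ ‖1 + x‖ := by
      have h5 : ‖(1:ℂ)‖ ≤ ‖1 + x‖ + ‖x‖ := by
        calc ‖(1:ℂ)‖ = ‖(1 + x) - x‖ := by ring_nf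
          _ ≤ ‖1 + x‖ + ‖x‖ := norm_sub_le _ _
      rw [norm_one] at h5
      linarith
    -- Step 1 : a ≤ 2C + 3
    have hstep1 : a ≤ 2 * C + 3 := by
      by_contra hcon
      push_neg at hcon
      have ha1 : 1 ≤ a := by linarith
      have hpow : a ≤ a ^ (m + 2) := le_self_pow₀ ha1 (by omega)
      have hab : a * b ≤ C := le_trans (mul_le_mul_of_nonneg_right hpow hb0) h2
      have hk1 : a - C ≤ b * (1 + a) :=
        le_trans hyx_ge (mul_le_mul_of_nonneg_left h1x_le hb0)
      nlinarith
    -- Step 2 : b ≤ 2^(m+2) C + 2C + 1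
    have hstep2 : b ≤ 2 ^ (m + 2) * C + 2 * C + 1 := by
      rcases le_or_gt (1/2 : ℝ) a with hhalf | hhalf
      · have hp : (1/2 : ℝ) ^ (m + 2) ≤ a ^ (m + 2) :=
          pow_le_pow_left₀ (by norm_num) hhalf _
        have : (1/2 : ℝ) ^ (m + 2) * b ≤ C :=
          le_trans (mul_le_mul_of_nonneg_right hp hb0) h2
        have h2pos : (0:ℝ) < (1/2 : ℝ) ^ (m + 2) := by positivity
        have hb : b ≤ C * 2 ^ (m + 2) := by
          rw [← le_div_iff₀' h2pos] at this
          calc b ≤ C / (1/2) ^ (m+2) := this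
          _ = C * 2 ^ (m+2) := by
              rw [div_pow, one_pow, div_div_eq_mul_div, div_one]
        have : (0:ℝ) ≤ 2 ^ (m+2) * C := by positivity
        nlinarith
      · have hgt : (1/2 : ℝ) ≤ ‖1 + x‖ := by linarith
        have : b * (1/2) ≤ C + a := le_trans (mul_le_mul_of_nonneg_left hgt hb0) hyx_le
        have h4 : (0:ℝ) ≤ 2 ^ (m+2) * C := by positivity
        nlinarith
    have : ‖((x, y) : ℂ × ℂ)‖ = max a b := rfl
    rw [this]
    apply max_le <;> nlinarith [pow_nonneg (by norm_num : (0:ℝ) ≤ 2) (m+2), mul_nonneg (pow_nonneg (by norm_num : (0:ℝ) ≤ 2) (m+2)) hC]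

open Polynomial in
lemma fiber_count (m : ℕ) (s t : ℂ) (hs : s + 1 ≠ 0) (ht : t ≠ 0)
    (hQ : ∀ u : ℂ, u ≠ 0 →
        (((m:ℂ)+2) * u^2 + ((m:ℂ)+3) * u = ((m:ℂ)+1) * s * u + ((m:ℂ)+2) * s →
        t * (((m:ℂ)+1) * u + ((m:ℂ)+2)) ≠ u ^ (m+3))) :
    ((fun p : ℂ × ℂ => (p.1 + p.2 + p.1 * p.2, p.1 ^ (m + 2) * p.2)) ⁻¹' {(s, t)}).ncard
      = m + 3 := by
  set g : ℂ[X] := X ^ (m + 3) - C s * X ^ (m + 2) + (C t * X + C t) with hg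
  -- degree
  have hnatdeg : g.natDegree = m + 3 := by
    rw [hg]
    compute_degree!
    rw [if_neg (by omega : ¬ m + 3 = 1)]
    norm_num
  have hg0 : g ≠ 0 := by
    intro h
    rw [h, natDegree_zero] at hnatdeg
    omega
  -- eval formulas
  have heval : ∀ u : ℂ, g.eval u = u ^ (m + 3) - s * u ^ (m + 2) + (t * u + t) := by
    intro u; simp [hg]
  have hderiv : ∀ u : ℂ, g.derivative.eval u
      = ((m : ℂ) + 3) * u ^ (m + 2) - s * (((m : ℂ) + 2) * u ^ (m + 1)) + t := by
    intro u
    rw [hg]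
    simp only [derivative_add, derivative_sub, derivative_X_pow, derivative_C_mul,
      derivative_C, derivative_X]
    simp only [show m + 3 - 1 = m + 2 from rfl, show m + 2 - 1 = m + 1 from rfl]
    push_cast
    simp
  -- separability
  have hsep : g.Separable := by
    rw [Polynomial.separable_def]
    rw [Polynomial.isCoprime_iff_aeval_ne_zero_of_isAlgClosed (k := ℂ) ℂ g (Polynomial.derivative g)]
    intro u
    by_contra hcon
    push_neg at hcon
    obtain ⟨hA, hB⟩ := hcon
    have haev : ∀ q : ℂ[X], (Polynomial.aeval u) q = q.eval u := by
      intro q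
      rw [Polynomial.coe_aeval_eq_eval]
    rw [haev, heval] at hA
    rw [haev, hderiv] at hB
    have hu0 : u ≠ 0 := by
      intro h
      subst h
      simp at hA
      exact ht hA
    -- quadratic relation
    have hq : ((m:ℂ)+2) * u^2 + ((m:ℂ)+3) * u = ((m:ℂ)+1) * s * u + ((m:ℂ)+2) * s := by
      have hq' : (((m:ℂ)+2) * u^2 + ((m:ℂ)+3) * u - (((m:ℂ)+1) * s * u + ((m:ℂ)+2) * s))
          * u ^ (m + 1) = 0 := by
        linear_combination -hA + (u + 1) * hB
      rcases mul_eq_zero.mp hq' with h | h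
      · linear_combination h
      · exact absurd h (pow_ne_zero _ hu0)
    -- second relation
    have hii : t * (((m:ℂ)+1) * u + ((m:ℂ)+2)) = u ^ (m+3) := by
      linear_combination ((((m:ℂ)+1) * u + ((m:ℂ)+2))) * hB - (((m:ℂ)+2) * u^(m+1)) * hq
    exact hQ u hu0 hq hii
  -- root count
  have hsplits : g.Splits := IsAlgClosed.splits g
  have hcard : g.roots.card = m + 3 := by
    rw [Polynomial.splits_iff_card_roots.mp hsplits, hnatdeg]
  have hnodup : g.roots.Nodup := Polynomial.nodup_roots hsep
  have hfcard : g.roots.toFinset.card = m + 3 := by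
    rw [Multiset.toFinset_card_of_nodup hnodup, hcard]
  -- fiber as image
  have hset : ((fun p : ℂ × ℂ => (p.1 + p.2 + p.1 * p.2, p.1 ^ (m + 2) * p.2)) ⁻¹' {(s, t)})
      = (fun x : ℂ => (x, (s - x) / (1 + x))) '' ↑g.roots.toFinset := by
    ext ⟨x, y⟩
    simp only [Set.mem_preimage, Set.mem_singleton_iff, Prod.mk.injEq, Set.mem_image,
      Multiset.mem_toFinset, Finset.coe_sort_coe, Finset.mem_coe, mem_roots hg0]
    constructor
    · rintro ⟨h1, h2⟩
      have hx1 : x ≠ -1 := by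
        intro h
        subst h
        apply hs
        rw [← h1]; ring
      have h1x : (1 : ℂ) + x ≠ 0 := fun h => hx1 (by linear_combination h)
      refine ⟨x, ?_, rfl, ?_⟩
      · show IsRoot g x
        rw [IsRoot.def, heval, ← h1, ← h2]; ring
      · field_simp
        linear_combination -h1
    · rintro ⟨x', hroot, hx, hy⟩
      subst hx
      rw [IsRoot.def, heval] at hroot
      have hx1 : x' ≠ -1 := by
        intro h
        subst h
        have h2 : (-(1:ℂ))^(m+2) * (1 + s) = 0 := by
          rw [pow_succ] at hroot
          linear_combination -hroot
        rcases mul_eq_zero.mp h2 with h3 | h3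
        · exact pow_ne_zero (m+2) (by norm_num : (-(1:ℂ)) ≠ 0) h3
        · exact hs (by linear_combination h3)
      have h1x : (1 : ℂ) + x' ≠ 0 := fun h => hx1 (by linear_combination h)
      subst hy
      constructor
      · field_simp
        ring
      · field_simp
        linear_combination -hroot
  rw [hset, Set.ncard_image_of_injective _ (fun a b h => (Prod.mk.injEq _ _ _ _).mp h |>.1),
    Set.ncard_coe_finset, hfcard]

/-- A proper map `f : ℂ² → ℂ²` has topological degree `d` if, away from an
algebraic curve (containing the branch locus), every fiber has exactly `d`
points. -/
def HasTopDegree (f : ℂ × ℂ → ℂ × ℂ) (d : ℕ) : Prop :=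
  ∃ P : MvPolynomial (Fin 2) ℂ, P ≠ 0 ∧
    ∀ p : ℂ × ℂ, MvPolynomial.eval ![p.1, p.2] P ≠ 0 → (f ⁻¹' {p}).ncard = d

/-- For every `d ≥ 3`, the polynomial map
`f_d(x,y) = (x + y + xy, x^{d-1} y)` is proper and has topological degree `d`. -/
theorem stmt_2 (d : ℕ) (hd : 3 ≤ d) :
    (∀ K : Set (ℂ × ℂ), IsCompact K →
      IsCompact ((fun p : ℂ × ℂ => (p.1 + p.2 + p.1 * p.2, p.1 ^ (d - 1) * p.2)) ⁻¹' K)) ∧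
    HasTopDegree (fun p : ℂ × ℂ => (p.1 + p.2 + p.1 * p.2, p.1 ^ (d - 1) * p.2)) d := by
  obtain ⟨m, rfl⟩ : ∃ m, d = m + 3 := ⟨d - 3, by omega⟩
  simp only [show m + 3 - 1 = m + 2 from rfl]
  have hm2 := hm2C m
  constructor
  · exact fun K hK => proper_part m K hK
  · refine ⟨MvPolynomial.X 1 * (MvPolynomial.X 0 + 1) * Qpoly m, ?_, ?_⟩
    · -- nonzero
      intro h
      set r2 : ℂ := -(((m:ℂ)+3)/((m:ℂ)+2)) with hr2
      set w : ℂ := ((m:ℂ)+2) * r2 ^ (m+3) with hw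
      set t0 : ℂ := ((‖w‖ + 1 : ℝ) : ℂ) with ht0
      have ht00 : t0 ≠ 0 := by
        rw [ht0]
        exact_mod_cast Complex.ofReal_ne_zero.mpr (by positivity)
      have ht0w : t0 ≠ w := by
        intro hh
        have : ‖t0‖ = ‖w‖ := by rw [hh]
        rw [ht0, Complex.norm_real, Real.norm_eq_abs, abs_of_pos (by positivity : (0:ℝ) < ‖w‖ + 1)] at this
        linarith
      have hsum : ((m : ℂ) + 2) * ((0:ℂ) + r2) = ((m : ℂ) + 1) * 0 - ((m : ℂ) + 3) := by
        rw [hr2]; field_simp; ring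
      have hprod : (0:ℂ) * r2 = -0 := by ring
      have hQe := Qpoly_eval m 0 t0 0 r2 hsum hprod
      have hz := congrArg (MvPolynomial.eval ![(0:ℂ), t0]) h
      simp only [map_mul, map_add, map_one, MvPolynomial.eval_X,
        map_zero, hQe] at hz
      have hx0 : (![(0:ℂ), t0] : Fin 2 → ℂ) 0 = 0 := rfl
      have hx1 : (![(0:ℂ), t0] : Fin 2 → ℂ) 1 = t0 := rfl
      rw [hx0, hx1] at hz
      have hf1 : t0 * (((m:ℂ)+1) * 0 + ((m:ℂ)+2)) - 0 ^ (m+3) ≠ 0 := by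
        rw [zero_pow (by omega : m + 3 ≠ 0)]
        simp only [mul_zero, zero_add, sub_zero]
        exact mul_ne_zero ht00 hm2
      have hf2 : t0 * (((m:ℂ)+1) * r2 + ((m:ℂ)+2)) - r2 ^ (m+3) ≠ 0 := by
        have hlin : ((m:ℂ)+1) * r2 + ((m:ℂ)+2) = 1/((m:ℂ)+2) := by
          rw [hr2]; field_simp; ring
        rw [hlin]
        intro hh
        apply ht0w
        rw [hw]
        field_simp at hh
        linear_combination hh
      apply mul_ne_zero (mul_ne_zero ht00 (by norm_num : (0:ℂ) + 1 ≠ 0)) (mul_ne_zero hf1 hf2)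
      linear_combination hz
    · -- fibers
      rintro ⟨s, t⟩ hp
      simp only [map_mul, map_add, map_one, MvPolynomial.eval_X] at hp
      have hx0 : (![s, t] : Fin 2 → ℂ) 0 = s := rfl
      have hx1 : (![s, t] : Fin 2 → ℂ) 1 = t := rfl
      rw [hx0, hx1] at hp
      have ht : t ≠ 0 := fun h => hp (by rw [h]; ring)
      have hs : s + 1 ≠ 0 := fun h => hp (by
        have : s = -1 := by linear_combination h
        rw [this]; ring)
      have hQne : MvPolynomial.eval ![s, t] (Qpoly m) ≠ 0 := by
        intro h
        exact hp (by rw [h]; ring)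
      apply fiber_count m s t hs ht
      intro u hu0 hq hii
      apply hQne
      have hsum : ((m : ℂ) + 2) * (u + (-s/u)) = ((m : ℂ) + 1) * s - ((m : ℂ) + 3) := by
        field_simp
        linear_combination hq
      have hprod : u * (-s/u) = -s := by field_simp
      rw [Qpoly_eval m s t u (-s/u) hsum hprod, hii]
      simp
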